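/- Let f : ℝⁿ → ℝ satisfy f ≥ 0, suppose f attains its global minimum at a unique point w* , and let K₁ = C_s = {(u, t) ∈ ℝⁿ × ℝ : t ≤ 0} and K₂ = C_f = {(w, y) ∈ ℝⁿ × ℝ : f(w) ≤ y} with f convex and continuous. If a ∈ K₁ and b ∈ K₂ satisfy ‖a − b‖ = inf{‖p − q‖ : p ∈ K₁, q ∈ K₂}, then b = (w*, f(w*)) and a = (w*, 0). In particular, any pair of nearest points of the level set and of the epigraph identifies the global minimizer w* of f. -/

import Mathlib

/-- The space `ℝⁿ × ℝ` with the Euclidean (ℓ²) product norm. -/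
abbrev LiftedSpace (n : ℕ) : Type := WithLp 2 (EuclideanSpace ℝ (Fin n) × ℝ)

/-- The epigraph `C_f = {(w, y) : f w ≤ y}` in `ℝⁿ × ℝ` with the ℓ² product norm. -/
def epigraphSet (n : ℕ) (f : EuclideanSpace ℝ (Fin n) → ℝ) : Set (LiftedSpace n) :=
  {p | f (WithLp.equiv 2 _ p).1 ≤ (WithLp.equiv 2 _ p).2}

/-- The level set `C_s = {(w, y) : y ≤ 0}` in `ℝⁿ × ℝ` with the ℓ² product norm. -/
def levelSet (n : ℕ) : Set (LiftedSpace n) :=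
  {p | (WithLp.equiv 2 _ p).2 ≤ 0}

lemma snd_norm_le (n : ℕ) (x : LiftedSpace n) : ‖x.snd‖ ≤ ‖x‖ := by
  calc ‖x.snd‖ = Real.sqrt (‖x.snd‖ ^ 2) := (Real.sqrt_sq (norm_nonneg _)).symm
    _ ≤ Real.sqrt (‖x.fst‖ ^ 2 + ‖x.snd‖ ^ 2) :=
        Real.sqrt_le_sqrt (le_add_of_nonneg_left (sq_nonneg _))
    _ = ‖x‖ := (WithLp.prod_norm_eq_of_L2 x).symm

lemma dist_lower_bound (n : ℕ) (f : EuclideanSpace ℝ (Fin n) → ℝ)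
    (wstar : EuclideanSpace ℝ (Fin n)) (hmin : ∀ w, f wstar ≤ f w)
    (p q : LiftedSpace n) (hp : p ∈ levelSet n) (hq : q ∈ epigraphSet n f) :
    f wstar ≤ ‖p - q‖ := by
  have hp' : p.snd ≤ 0 := hp
  have hq' : f q.fst ≤ q.snd := hq
  have h1 := hmin q.fst
  refine le_trans ?_ (snd_norm_le n (p - q))
  rw [WithLp.sub_snd, Real.norm_eq_abs]
  calc f wstar ≤ q.snd - p.snd := by linarith
    _ = -(p.snd - q.snd) := by ring
    _ ≤ |p.snd - q.snd| := neg_le_abs _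

/-- For `f ≥ 0` convex and continuous with unique global minimizer `wstar`: any pair of
nearest points `a ∈ C_s`, `b ∈ C_f` of the level set and the epigraph must be
`a = (wstar, 0)` and `b = (wstar, f wstar)`, so such a pair identifies the minimizer. -/
theorem nearest_points_identify_minimizer (n : ℕ) (f : EuclideanSpace ℝ (Fin n) → ℝ)
    (hf0 : ∀ w, 0 ≤ f w) (hconv : ConvexOn ℝ Set.univ f) (hcont : Continuous f)
    (wstar : EuclideanSpace ℝ (Fin n)) (hmin : ∀ w, f wstar ≤ f w)
    (huniq : ∀ w, f w = f wstar → w = wstar)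
    (a b : LiftedSpace n) (ha : a ∈ levelSet n) (hb : b ∈ epigraphSet n f)
    (hdist : ‖a - b‖ = sInf {d : ℝ | ∃ p ∈ levelSet n, ∃ q ∈ epigraphSet n f, d = ‖p - q‖}) :
    b = (WithLp.equiv 2 (EuclideanSpace ℝ (Fin n) × ℝ)).symm (wstar, f wstar) ∧
    a = (WithLp.equiv 2 (EuclideanSpace ℝ (Fin n) × ℝ)).symm (wstar, 0) := by
  set e := WithLp.equiv 2 (EuclideanSpace ℝ (Fin n) × ℝ)
  set S := {d : ℝ | ∃ p ∈ levelSet n, ∃ q ∈ epigraphSet n f, d = ‖p - q‖}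
  -- f wstar ∈ S
  have hmem : f wstar ∈ S := by
    refine ⟨e.symm (wstar, 0), ?_, e.symm (wstar, f wstar), ?_, ?_⟩
    · exact le_refl (0 : ℝ)
    · exact le_refl (f wstar)
    · have : e.symm (wstar, 0) - e.symm (wstar, f wstar) = e.symm (0, -(f wstar)) := by
        show WithLp.toLp 2 (wstar, 0) - WithLp.toLp 2 (wstar, f wstar) = WithLp.toLp 2 (0, -(f wstar))
        rw [← WithLp.toLp_sub]; congr 1; ext <;> simp
      rw [this, WithLp.prod_norm_eq_of_L2]
      have h1 : (e.symm (0, -(f wstar))).fst = (0 : EuclideanSpace ℝ (Fin n)) := rfl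
      have h2 : (e.symm (0, -(f wstar))).snd = -(f wstar) := rfl
      rw [h1, h2]
      simp [Real.sqrt_sq (hf0 wstar)]
  have hlb : ∀ d ∈ S, f wstar ≤ d := by
    rintro d ⟨p, hp, q, hq, rfl⟩
    exact dist_lower_bound n f wstar hmin p q hp hq
  have hinf : sInf S = f wstar :=
    le_antisymm (csInf_le ⟨f wstar, hlb⟩ hmem) (le_csInf ⟨_, hmem⟩ hlb)
  rw [hinf] at hdist
  -- unfold components
  have ha' : a.snd ≤ 0 := ha
  have hb' : f b.fst ≤ b.snd := hb
  have h1 := hmin b.fst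
  have hy : f wstar ≤ b.snd - a.snd := by linarith
  have hsq : ‖a.fst - b.fst‖ ^ 2 + (a.snd - b.snd) ^ 2 = (f wstar) ^ 2 := by
    have := WithLp.prod_norm_sq_eq_of_L2 (a - b)
    rw [hdist, WithLp.sub_fst, WithLp.sub_snd, Real.norm_eq_abs, sq_abs] at this
    linarith
  have hswap : (a.snd - b.snd) ^ 2 = (b.snd - a.snd) ^ 2 := by ring
  have hXsq : (f wstar) ^ 2 ≤ (b.snd - a.snd) ^ 2 := pow_le_pow_left₀ (hf0 wstar) hy 2
  have hfst : a.fst = b.fst := by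
    have hle : ‖a.fst - b.fst‖ ^ 2 ≤ 0 := by nlinarith
    have : ‖a.fst - b.fst‖ = 0 := by nlinarith [norm_nonneg (a.fst - b.fst)]
    exact sub_eq_zero.mp (norm_eq_zero.mp this)
  have hyeq : b.snd - a.snd = f wstar := by
    have hXsq2 : (b.snd - a.snd) ^ 2 ≤ (f wstar) ^ 2 := by
      nlinarith [sq_nonneg ‖a.fst - b.fst‖]
    nlinarith [hf0 wstar]
  have hbsnd : b.snd = f wstar := by linarith [hf0 wstar]
  have hasnd : a.snd = 0 := by linarith
  have hbw : b.fst = wstar := huniq b.fst (le_antisymm (by linarith) h1)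
  constructor
  · refine (Equiv.eq_symm_apply e).mpr (Prod.ext ?_ ?_)
    · exact hbw
    · exact hbsnd
  · refine (Equiv.eq_symm_apply e).mpr (Prod.ext ?_ ?_)
    · rw [show (e a).1 = a.fst from rfl, hfst, hbw]
    · exact hasnd
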